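/- For any irrational number x ∈ [0,1) and any n ≥ 1, |log q_n(x) + (log x + log Tx + ⋯ + log T^{n−1}x)| ≤ log 2, where T is the Gauss map and q_n(x) is the denominator of the n-th continued fraction convergent of x. -/

import Mathlib

open MeasureTheory Filter Set

/-- The β-transformation `T_β x = βx - ⌊βx⌋` on `[0,1)`. -/
noncomputable def betaT (β : ℝ) (x : ℝ) : ℝ := β * x - ⌊β * x⌋

/-- The `i`-th digit (for `i ≥ 1`) of the β-expansion of `x`. -/
noncomputable def betaEps (β : ℝ) (i : ℕ) (x : ℝ) : ℤ := ⌊β * (betaT β)^[i - 1] x⌋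

/-- The cylinder of order `n` of the β-expansion containing `x`. -/
def betaCyl (β : ℝ) (n : ℕ) (x : ℝ) : Set ℝ :=
  {y ∈ Set.Ico (0:ℝ) 1 | ∀ i, 1 ≤ i → i ≤ n → betaEps β i y = betaEps β i x}

/-- The Gauss map, with `T 0 = 0`. -/
noncomputable def gaussMap (x : ℝ) : ℝ := if x = 0 then 0 else 1 / x - ⌊1 / x⌋

/-- The `i`-th partial quotient (for `i ≥ 1`) of the continued fraction expansion of `x`. -/
noncomputable def cfA (i : ℕ) (x : ℝ) : ℤ := ⌊1 / (gaussMap^[i - 1] x)⌋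

/-- The cylinder of order `m` of the continued fraction expansion containing `x`. -/
def cfCyl (m : ℕ) (x : ℝ) : Set ℝ :=
  {y ∈ Set.Ico (0:ℝ) 1 | ∀ i, 1 ≤ i → i ≤ m → cfA i y = cfA i x}

/-- `k_n(x)`: the exact number of partial quotients of the continued fraction of `x`
determined by the first `n` β-expansion digits of `x`. -/
noncomputable def kCF (β : ℝ) (n : ℕ) (x : ℝ) : ℕ :=
  sSup {m | betaCyl β n x ⊆ cfCyl m x}

/-- Denominators `q_n(x)` of the continued fraction convergents of `x`
(`q_0 = 1`, `q_1 = a_1`, `q_n = a_n q_{n-1} + q_{n-2}`). -/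
noncomputable def cfQ (x : ℝ) : ℕ → ℤ
  | 0 => 1
  | 1 => cfA 1 x
  | (n + 2) => cfA (n + 2) x * cfQ x (n + 1) + cfQ x n

/-- Numerators `p_n(x)` of the continued fraction convergents of `x`
(`p_0 = 0`, `p_1 = 1`, `p_n = a_n p_{n-1} + p_{n-2}`). -/
noncomputable def cfP (x : ℝ) : ℕ → ℤ
  | 0 => 0
  | 1 => 1
  | (n + 2) => cfA (n + 2) x * cfP x (n + 1) + cfP x n

/-- `l_n(x)`: the length of the longest string of zeros just after the `n`-th digit
of the β-expansion of `x`. -/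
noncomputable def lZero (β : ℝ) (n : ℕ) (x : ℝ) : ℕ :=
  sSup {k | ∀ j, 1 ≤ j → j ≤ k → betaEps β (n + j) x = 0}

lemma gauss_step (y : ℝ) (h1 : Irrational y) (h2 : y ∈ Set.Ioo (0:ℝ) 1) :
    Irrational (gaussMap y) ∧ gaussMap y ∈ Set.Ioo (0:ℝ) 1 := by
  have hy0 : y ≠ 0 := ne_of_gt h2.1
  have hg : gaussMap y = Int.fract (1/y) := by
    rw [gaussMap, if_neg hy0, Int.fract]
  have hinv : Irrational (1/y) := by rw [one_div]; exact h1.inv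
  have hirr : Irrational (gaussMap y) := by
    rw [hg, Int.fract]; exact hinv.sub_intCast _
  refine ⟨hirr, ⟨?_, ?_⟩⟩
  · rcases lt_or_eq_of_le (show (0:ℝ) ≤ gaussMap y by rw [hg]; exact Int.fract_nonneg _)
      with h | h
    · exact h
    · exact absurd h.symm hirr.ne_zero
  · rw [hg]; exact Int.fract_lt_one _

theorem log_qn_birkhoff (x : ℝ) (hx : x ∈ Set.Ico (0:ℝ) 1) (hirr : Irrational x)
    (n : ℕ) (hn : 1 ≤ n) :
    |Real.log (cfQ x n) + ∑ i ∈ Finset.range n, Real.log (gaussMap^[i] x)| ≤ Real.log 2 := by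
  set t : ℕ → ℝ := fun k => gaussMap^[k] x with htdef
  have hx0 : (0:ℝ) < x := lt_of_le_of_ne hx.1 (Ne.symm hirr.ne_zero)
  -- all iterates are irrational and in (0,1)
  have ht : ∀ k, Irrational (t k) ∧ t k ∈ Set.Ioo (0:ℝ) 1 := by
    intro k
    induction k with
    | zero => exact ⟨hirr, ⟨hx0, hx.2⟩⟩
    | succ k ih =>
      have : t (k+1) = gaussMap (t k) := Function.iterate_succ_apply' _ _ _
      rw [this]
      exact gauss_step _ ih.1 ih.2
  have htpos : ∀ k, 0 < t k := fun k => (ht k).2.1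
  have htlt : ∀ k, t k < 1 := fun k => (ht k).2.2
  -- step relation
  have hstep : ∀ k, t (k+1) = 1 / t k - ⌊1 / t k⌋ := by
    intro k
    have : t (k+1) = gaussMap (t k) := Function.iterate_succ_apply' _ _ _
    rw [this, gaussMap, if_neg (ne_of_gt (htpos k))]
  -- cfA in terms of t
  have hAdef : ∀ k, cfA (k+1) x = ⌊1 / t k⌋ := by
    intro k; rfl
  have hinvgt : ∀ k, 1 < 1 / t k := by
    intro k
    rw [lt_div_iff₀ (htpos k)]
    linarith [htlt k]
  have ha : ∀ k, (1:ℤ) ≤ cfA (k+1) x := by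
    intro k
    rw [hAdef k]
    exact Int.le_floor.mpr (by exact_mod_cast (hinvgt k).le)
  have hA : ∀ k, (cfA (k+1) x : ℝ) = 1 / t k - t (k+1) := by
    intro k
    rw [hAdef k, hstep k]; ring
  -- positivity / monotonicity of q
  have hq : ∀ m, 1 ≤ cfQ x m ∧ cfQ x m ≤ cfQ x (m+1) := by
    intro m
    induction m with
    | zero => exact ⟨le_refl _, by show (1:ℤ) ≤ cfA 1 x; exact ha 0⟩
    | succ m ih =>
      have h1 : 1 ≤ cfQ x (m+1) := le_trans ih.1 ih.2
      have ha' : 1 ≤ cfA (m+2) x := ha (m+1)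
      constructor
      · exact h1
      · show cfQ x (m+1) ≤ cfA (m+2) x * cfQ x (m+1) + cfQ x m
        nlinarith [ih.1, ih.2]
  -- the determinant identity
  have hE : ∀ m, cfP x (m+1) * cfQ x m - cfQ x (m+1) * cfP x m = (-1:ℤ)^m := by
    intro m
    induction m with
    | zero => simp [cfP, cfQ]
    | succ m ih =>
      show cfP x (m+2) * cfQ x (m+1) - cfQ x (m+2) * cfP x (m+1) = (-1:ℤ)^(m+1)
      rw [show cfP x (m+2) = cfA (m+2) x * cfP x (m+1) + cfP x m from rfl,
          show cfQ x (m+2) = cfA (m+2) x * cfQ x (m+1) + cfQ x m from rfl]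
      have : cfP x m * cfQ x (m+1) - cfQ x m * cfP x (m+1)
          = -((-1:ℤ)^m) := by linarith [ih]
      ring_nf
      ring_nf at this
      linarith [this]
  -- the product identity: q_m x - p_m = (-1)^m * ∏_{i ≤ m} t i
  have hD : ∀ m, ((cfQ x m : ℝ) * x - cfP x m = (-1:ℝ)^m * ∏ i ∈ Finset.range (m+1), t i)
      ∧ ((cfQ x (m+1) : ℝ) * x - cfP x (m+1)
          = (-1:ℝ)^(m+1) * ∏ i ∈ Finset.range (m+2), t i) := by
    intro m
    induction m with
    | zero =>
      constructor
      · simp [cfQ, cfP, Finset.prod_range_one]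
        rfl
      · have h1 : (cfA 1 x : ℝ) = 1 / t 0 - t 1 := hA 0
        have ht0 : t 0 = x := rfl
        have hx0' : t 0 ≠ 0 := ne_of_gt (htpos 0)
        show (cfQ x 1 : ℝ) * x - cfP x 1 = (-1:ℝ)^1 * ∏ i ∈ Finset.range 2, t i
        rw [show cfQ x 1 = cfA 1 x from rfl, show cfP x 1 = (1:ℤ) from rfl]
        push_cast
        rw [h1, ← ht0]
        simp only [Finset.prod_range_succ, Finset.prod_range_one]
        field_simp
        simp only [Finset.prod_range_zero]
        ring
    | succ m ih =>
      refine ⟨ih.2, ?_⟩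
      have hAm : (cfA (m+2) x : ℝ) = 1 / t (m+1) - t (m+2) := hA (m+1)
      have hrec : (cfQ x (m+2) : ℝ) * x - cfP x (m+2)
          = (cfA (m+2) x : ℝ) * ((cfQ x (m+1) : ℝ) * x - cfP x (m+1))
            + ((cfQ x m : ℝ) * x - cfP x m) := by
        rw [show cfQ x (m+2) = cfA (m+2) x * cfQ x (m+1) + cfQ x m from rfl,
            show cfP x (m+2) = cfA (m+2) x * cfP x (m+1) + cfP x m from rfl]
        push_cast
        ring
      rw [hrec, ih.1, ih.2, hAm]
      simp only [Finset.prod_range_succ]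
      have hne : t (m+1) ≠ 0 := ne_of_gt (htpos (m+1))
      field_simp
      ring
  -- now specialize at n = m + 1
  obtain ⟨m, rfl⟩ : ∃ m, n = m + 1 := ⟨n - 1, (Nat.succ_pred_eq_of_pos hn).symm⟩
  set P : ℝ := ∏ i ∈ Finset.range (m+1), t i with hPdef
  have hPpos : 0 < P := Finset.prod_pos (fun i _ => htpos i)
  have hDm : (cfQ x m : ℝ) * x - cfP x m = (-1:ℝ)^m * P := (hD m).1
  have hDm1 : (cfQ x (m+1) : ℝ) * x - cfP x (m+1) = (-1:ℝ)^(m+1) * (P * t (m+1)) := by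
    rw [(hD m).2, hPdef, ← Finset.prod_range_succ]
  have hEm : (cfP x (m+1) : ℝ) * cfQ x m - (cfQ x (m+1) : ℝ) * cfP x m = (-1:ℝ)^m := by
    exact_mod_cast congrArg (Int.cast : ℤ → ℝ) (hE m)
  -- key: P * (q_{m+1} + q_m * t_{m+1}) = 1
  have hkey : P * ((cfQ x (m+1) : ℝ) + (cfQ x m : ℝ) * t (m+1)) = 1 := by
    have hcomb : (cfQ x (m+1) : ℝ) * ((cfQ x m : ℝ) * x - cfP x m)
        - (cfQ x m : ℝ) * ((cfQ x (m+1) : ℝ) * x - cfP x (m+1))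
        = (cfP x (m+1) : ℝ) * cfQ x m - (cfQ x (m+1) : ℝ) * cfP x m := by ring
    rw [hDm, hDm1, hEm] at hcomb
    have hsign : ((-1:ℝ)^m) ≠ 0 := by positivity
    have : (-1:ℝ)^(m+1) = -((-1:ℝ)^m) := by ring
    rw [this] at hcomb
    have := mul_left_cancel₀ hsign (show (-1:ℝ)^m * (P * ((cfQ x (m+1) : ℝ)
        + (cfQ x m : ℝ) * t (m+1))) = (-1:ℝ)^m * 1 by rw [mul_one]; nlinarith [hcomb])
    linarith [this]
  -- bounds
  have hq1 : (1:ℝ) ≤ (cfQ x (m+1) : ℝ) := by exact_mod_cast le_trans (hq m).1 (hq m).2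
  have hqm : (1:ℝ) ≤ (cfQ x m : ℝ) := by exact_mod_cast (hq m).1
  have hqle : (cfQ x m : ℝ) ≤ (cfQ x (m+1) : ℝ) := by exact_mod_cast (hq m).2
  set Q : ℝ := (cfQ x (m+1) : ℝ)
  have htm : 0 < t (m+1) := htpos (m+1)
  have htm1 : t (m+1) < 1 := htlt (m+1)
  have h1 : 0 ≤ P * ((cfQ x m : ℝ) * t (m+1)) :=
    mul_nonneg hPpos.le (mul_nonneg (by linarith) htm.le)
  have hQP_le : Q * P ≤ 1 := by nlinarith [hkey, h1]
  have h2 : (cfQ x m : ℝ) * t (m+1) ≤ Q := by nlinarith [hqle, htm1, htm, hqm]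
  have hQP_ge : 1/2 ≤ Q * P := by
    nlinarith [hkey, mul_le_mul_of_nonneg_left h2 hPpos.le]
  have hQPpos : 0 < Q * P := by positivity
  -- rewrite the sum of logs
  have hsum : ∑ i ∈ Finset.range (m+1), Real.log (gaussMap^[i] x) = Real.log P := by
    rw [hPdef]
    rw [Real.log_prod (fun i _ => ne_of_gt (htpos i))]
  rw [hsum, ← Real.log_mul (by positivity) (ne_of_gt hPpos)]
  rw [abs_le]
  constructor
  · have h1 : Real.log (1/2) ≤ Real.log (Q * P) :=
      Real.log_le_log (by norm_num) hQP_ge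
    rw [show (1:ℝ)/2 = 2⁻¹ by norm_num, Real.log_inv] at h1
    linarith
  · have h2 : Real.log (Q * P) ≤ Real.log 1 := Real.log_le_log hQPpos hQP_le
    rw [Real.log_one] at h2
    have : (0:ℝ) ≤ Real.log 2 := Real.log_nonneg (by norm_num)
    linarith
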